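/- For any positive integer $k$ and any integer $n \ge 1$, the fan graph $P_n + K_1$ satisfies: $\dim_k(P_n + K_1) = 1$ if $n = 1$; $\dim_k(P_n + K_1) = 2$ if $n \in \{2, 3\}$; $\dim_k(P_n + K_1) = 3$ if $n = 6$; and $\dim_k(P_n + K_1) = \lfloor \tfrac{2n+2}{5} \rfloor$ otherwise. -/

import Mathlib

open SimpleGraph

/-- The distance-`k` truncated distance `dₖ(x,y) = min{d(x,y), k+1}`, valued in `ℕ∞`
(so unreachable pairs have distance `⊤`, which is truncated to `k+1`). -/
noncomputable def distK {V : Type*} (G : SimpleGraph V) (k : ℕ) (x y : V) : ℕ∞ :=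
  min (G.edist x y) (k + 1)

/-- `S` is a distance-`k` resolving set of `G`. -/
def IsDistKResolving {V : Type*} (G : SimpleGraph V) (k : ℕ) (S : Set V) : Prop :=
  ∀ x y : V, x ≠ y → ∃ z ∈ S, distK G k x z ≠ distK G k y z

/-- The distance-`k` dimension of a finite graph `G`: the minimum cardinality of a
distance-`k` resolving set of `G`. -/
noncomputable def dimK {V : Type*} [Fintype V] (G : SimpleGraph V) (k : ℕ) : ℕ :=
  sInf { m | ∃ S : Finset V, IsDistKResolving G k ↑S ∧ S.card = m }

/-- The join of two graphs: their disjoint union together with all edges between them. -/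
def graphJoin {α β : Type*} (G : SimpleGraph α) (H : SimpleGraph β) :
    SimpleGraph (α ⊕ β) where
  Adj x y := match x, y with
    | Sum.inl a, Sum.inl b => G.Adj a b
    | Sum.inr a, Sum.inr b => H.Adj a b
    | Sum.inl _, Sum.inr _ => True
    | Sum.inr _, Sum.inl _ => True
  symm := by
    constructor
    rintro (a | a) (b | b) h
    · exact G.symm.symm _ _ h
    · trivial
    · trivial
    · exact H.symm.symm _ _ h
  loopless := by
    constructor
    rintro (a | a) h
    · exact G.loopless.irrefl a h
    · exact H.loopless.irrefl a h

open Finset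

def adjN (a b : ℕ) : Prop := a + 1 = b ∨ b + 1 = a
instance (a b : ℕ) : Decidable (adjN a b) := inferInstanceAs (Decidable (_ ∨ _))

abbrev Fan (n : ℕ) : SimpleGraph (Fin n ⊕ Fin 1) :=
  graphJoin (pathGraph n) (⊤ : SimpleGraph (Fin 1))

def fanAdj (n : ℕ) : (Fin n ⊕ Fin 1) → (Fin n ⊕ Fin 1) → Prop
  | Sum.inl i, Sum.inl j => adjN i.val j.val
  | Sum.inl _, Sum.inr _ => True
  | Sum.inr _, Sum.inl _ => True
  | Sum.inr _, Sum.inr _ => False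

instance (n : ℕ) (x y : Fin n ⊕ Fin 1) : Decidable (fanAdj n x y) := by
  rcases x with i | i <;> rcases y with j | j <;>
    simp only [fanAdj] <;> infer_instance

lemma fan_adj (n : ℕ) (x y : Fin n ⊕ Fin 1) : (Fan n).Adj x y ↔ fanAdj n x y := by
  rcases x with i | i <;> rcases y with j | j
  · show (pathGraph n).Adj i j ↔ _
    rw [pathGraph_adj]; rfl
  · exact Iff.rfl
  · exact Iff.rfl
  · show (⊤ : SimpleGraph (Fin 1)).Adj i j ↔ False
    simp [Subsingleton.elim i j]

lemma fan_edist_eq_two (n : ℕ) (x y : Fin n ⊕ Fin 1) (hxy : x ≠ y)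
    (hadj : ¬ (Fan n).Adj x y) : (Fan n).edist x y = 2 := by
  have hle : (Fan n).edist x y ≤ 2 := by
    rcases x with i | i
    · rcases y with j | j
      · have h1 : (Fan n).Adj (Sum.inl i) (Sum.inr 0) := by rw [fan_adj]; trivial
        have h2 : (Fan n).Adj (Sum.inr 0) (Sum.inl j) := by rw [fan_adj]; trivial
        have := SimpleGraph.edist_le (h1.toWalk.append h2.toWalk)
        simpa using this
      · exact absurd (by rw [fan_adj]; trivial) hadj
    · rcases y with j | j
      · exact absurd (by rw [fan_adj]; trivial) hadj
      · exact absurd (congrArg Sum.inr (Subsingleton.elim i j)) hxy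
  have hne0 : (Fan n).edist x y ≠ 0 := by
    rw [Ne, SimpleGraph.edist_eq_zero_iff]; exact hxy
  have hne1 : (Fan n).edist x y ≠ 1 := by
    rw [Ne, SimpleGraph.edist_eq_one_iff_adj]; exact hadj
  have hnetop : (Fan n).edist x y ≠ ⊤ := by
    intro h; rw [h] at hle; exact absurd hle (by simp)
  lift (Fan n).edist x y to ℕ using hnetop with m hm
  have : m ≤ 2 := by exact_mod_cast hle
  have h0 : m ≠ 0 := by exact_mod_cast hne0
  have h1 : m ≠ 1 := by exact_mod_cast hne1
  have : m = 2 := by omega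
  exact_mod_cast this

lemma distK_fan {k n : ℕ} (hk : 1 ≤ k) (x y : Fin n ⊕ Fin 1) :
    distK (Fan n) k x y =
      if x = y then 0 else if fanAdj n x y then 1 else 2 := by
  unfold distK
  by_cases h1 : x = y
  · subst h1; simp [SimpleGraph.edist_self]
  · by_cases h2 : fanAdj n x y
    · rw [if_neg h1, if_pos h2,
        SimpleGraph.edist_eq_one_iff_adj.mpr ((fan_adj n x y).mpr h2)]
      exact min_eq_left le_add_self
    · rw [if_neg h1, if_neg h2,
        fan_edist_eq_two n x y h1 (fun h => h2 ((fan_adj n x y).mp h))]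
      have h1k : (1:ℕ∞) ≤ (k:ℕ∞) := by exact_mod_cast hk
      have h2k : (2:ℕ∞) ≤ (k:ℕ∞)+1 := by
        calc (2:ℕ∞) = 1+1 := by norm_num
        _ ≤ _ := add_le_add h1k le_rfl
      exact min_eq_left h2k

/-- the "signature" of u w.r.t. T : elements of T path-adjacent to u -/
def sigN (T : Finset ℕ) (u : ℕ) : Finset ℕ := T.filter (fun t => adjN t u)

def sGood (T : Finset ℕ) (t : ℕ) : Prop :=
  (t+1 ∉ T ∧ t+2 ∉ T) ∨ ((∀ a ∈ T, a+1 ≠ t) ∧ (∀ a ∈ T, a+2 ≠ t))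

instance (T : Finset ℕ) (t : ℕ) : Decidable (sGood T t) :=
  inferInstanceAs (Decidable (_ ∨ _))

def pGood (T : Finset ℕ) (t : ℕ) : Prop := t+1 ∉ T ∧ t+2 ∈ T

instance (T : Finset ℕ) (t : ℕ) : Decidable (pGood T t) :=
  inferInstanceAs (Decidable (_ ∧ _))

lemma sGood_mono {T T' : Finset ℕ} (h : T' ⊆ T) {t : ℕ} (hg : sGood T t) : sGood T' t := by
  rcases hg with ⟨h1, h2⟩ | ⟨h1, h2⟩
  · exact Or.inl ⟨fun c => h1 (h c), fun c => h2 (h c)⟩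
  · exact Or.inr ⟨fun a ha => h1 a (h ha), fun a ha => h2 a (h ha)⟩

/-- key counting lemma: 2(s+p) ≤ 3|T| -/
lemma key3 : ∀ (m : ℕ) (T : Finset ℕ), T.card = m →
    2 * ((T.filter (sGood T)).card + (T.filter (pGood T)).card) ≤ 3 * m := by
  intro m
  induction m using Nat.strong_induction_on with
  | _ m ih =>
    intro T hT
    rcases Finset.eq_empty_or_nonempty T with rfl | hne
    · simp at hT; simp [← hT]
    have hm : 1 ≤ m := by rw [← hT]; exact Finset.card_pos.mpr hne
    set M := T.max' hne with hM
    have hMT : M ∈ T := T.max'_mem hne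
    have hle : ∀ t ∈ T, t ≤ M := fun t ht => T.le_max' t ht
    by_cases hc : ∃ c ∈ T, c + 2 = M ∧ c + 1 ∉ T
    · -- case (b)
      obtain ⟨c, hcT, hc2, hc1⟩ := hc
      have hcM : c ≠ M := by omega
      set T'' : Finset ℕ := (T.erase M).erase c with hT''
      have hsub : T'' ⊆ T := (Finset.erase_subset _ _).trans (Finset.erase_subset _ _)
      have hcard'' : T''.card = m - 2 := by
        rw [hT'', Finset.card_erase_of_mem (Finset.mem_erase.mpr ⟨hcM, hcT⟩),
          Finset.card_erase_of_mem hMT, hT]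
        omega
      have hMnot : M ∉ T'' := by simp [hT'']
      have hcnot : c ∉ T'' := by simp [hT'']
      have hmem'' : ∀ x, x ∈ T'' ↔ (x ∈ T ∧ x ≠ M ∧ x ≠ c) := by
        intro x; simp [hT'']; tauto
      have hm2 : 2 ≤ m := by
        rw [← hT]; exact Finset.one_lt_card.mpr ⟨c, hcT, M, hMT, hcM⟩
      have ihr := ih (m - 2) (by omega) T'' hcard''
      -- p bound
      have hpsub : ∀ (extra : Prop) (hd : Decidable extra),
          True := fun _ _ => trivial
      by_cases hgain : ∃ a ∈ T, a + 2 = c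
      · -- (b1): sGood T c fails
        obtain ⟨a, haT, ha2⟩ := hgain
        have hsgc : ¬ sGood T c := by
          rintro (⟨h1, h2⟩ | ⟨h1, h2⟩)
          · exact h2 (by rw [hc2]; exact hMT)
          · exact h2 a haT ha2
        have hssub : T.filter (sGood T) ⊆ insert M (T''.filter (sGood T'')) := by
          intro t ht
          rw [Finset.mem_filter] at ht
          obtain ⟨htT, hgt⟩ := ht
          rcases eq_or_ne t M with rfl | htM
          · exact Finset.mem_insert_self _ _
          have htc : t ≠ c := fun h => hsgc (h ▸ hgt)
          exact Finset.mem_insert_of_mem (Finset.mem_filter.mpr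
            ⟨(hmem'' t).mpr ⟨htT, htM, htc⟩, sGood_mono hsub hgt⟩)
        have hpsub2 : T.filter (pGood T) ⊆
            insert c (insert a (T''.filter (pGood T''))) := by
          intro t ht
          rw [Finset.mem_filter] at ht
          obtain ⟨htT, ht1, ht2⟩ := ht
          have htM : t ≠ M := by
            intro h; subst h; exact absurd (hle _ ht2) (by omega)
          rcases eq_or_ne t c with rfl | htc
          · exact Finset.mem_insert_self _ _
          rcases eq_or_ne t a with rfl | hta
          · exact Finset.mem_insert_of_mem (Finset.mem_insert_self _ _)
          refine Finset.mem_insert_of_mem (Finset.mem_insert_of_mem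
            (Finset.mem_filter.mpr ⟨(hmem'' t).mpr ⟨htT, htM, htc⟩, ?_, ?_⟩))
          · intro hcon; exact ht1 (hsub hcon)
          · rw [hmem'']
            refine ⟨ht2, ?_, ?_⟩
            · intro h; rw [h] at ht2; omega
            · intro h; exact hta (by omega)
        have h1 := Finset.card_le_card hssub
        have h2 := Finset.card_le_card hpsub2
        have e1 := Finset.card_insert_le M (T''.filter (sGood T''))
        have e2 := Finset.card_insert_le c (insert a (T''.filter (pGood T'')))
        have e3 := Finset.card_insert_le a (T''.filter (pGood T''))
        omega
      · -- (b2): no pGood gain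
        push_neg at hgain
        have hssub : T.filter (sGood T) ⊆
            insert M (insert c (T''.filter (sGood T''))) := by
          intro t ht
          rw [Finset.mem_filter] at ht
          obtain ⟨htT, hgt⟩ := ht
          rcases eq_or_ne t M with rfl | htM
          · exact Finset.mem_insert_self _ _
          rcases eq_or_ne t c with rfl | htc
          · exact Finset.mem_insert_of_mem (Finset.mem_insert_self _ _)
          exact Finset.mem_insert_of_mem (Finset.mem_insert_of_mem (Finset.mem_filter.mpr
            ⟨(hmem'' t).mpr ⟨htT, htM, htc⟩, sGood_mono hsub hgt⟩))
        have hpsub2 : T.filter (pGood T) ⊆ insert c (T''.filter (pGood T'')) := by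
          intro t ht
          rw [Finset.mem_filter] at ht
          obtain ⟨htT, ht1, ht2⟩ := ht
          have htM : t ≠ M := by
            intro h; subst h; exact absurd (hle _ ht2) (by omega)
          rcases eq_or_ne t c with rfl | htc
          · exact Finset.mem_insert_self _ _
          refine Finset.mem_insert_of_mem (Finset.mem_filter.mpr
            ⟨(hmem'' t).mpr ⟨htT, htM, htc⟩, ?_, ?_⟩)
          · intro hcon; exact ht1 (hsub hcon)
          · rw [hmem'']
            refine ⟨ht2, ?_, fun h => hgain t htT h⟩
            intro h; rw [h] at ht2; omega
        have h1 := Finset.card_le_card hssub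
        have h2 := Finset.card_le_card hpsub2
        have e1 := Finset.card_insert_le M (insert c (T''.filter (sGood T'')))
        have e2 := Finset.card_insert_le c (T''.filter (sGood T''))
        have e3 := Finset.card_insert_le c (T''.filter (pGood T''))
        omega
    · -- case (a)
      push_neg at hc
      set T' : Finset ℕ := T.erase M with hT'
      have hsub : T' ⊆ T := Finset.erase_subset _ _
      have hcard' : T'.card = m - 1 := by
        rw [hT', Finset.card_erase_of_mem hMT, hT]
      have hmem' : ∀ x, x ∈ T' ↔ (x ∈ T ∧ x ≠ M) := by intro x; simp [hT']; tauto
      have ihr := ih (m - 1) (by omega) T' hcard'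
      have hssub : T.filter (sGood T) ⊆ insert M (T'.filter (sGood T')) := by
        intro t ht
        rw [Finset.mem_filter] at ht
        obtain ⟨htT, hgt⟩ := ht
        rcases eq_or_ne t M with rfl | htM
        · exact Finset.mem_insert_self _ _
        exact Finset.mem_insert_of_mem (Finset.mem_filter.mpr
          ⟨(hmem' t).mpr ⟨htT, htM⟩, sGood_mono hsub hgt⟩)
      have hpsub : T.filter (pGood T) ⊆ T'.filter (pGood T') := by
        intro t ht
        rw [Finset.mem_filter] at ht
        obtain ⟨htT, ht1, ht2⟩ := ht
        have htM : t ≠ M := by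
          intro h; subst h; exact absurd (hle _ ht2) (by omega)
        refine Finset.mem_filter.mpr ⟨(hmem' t).mpr ⟨htT, htM⟩, ?_, ?_⟩
        · intro hcon; exact ht1 (hsub hcon)
        · rw [hmem']
          exact ⟨ht2, fun h => ht1 (hc t htT h)⟩
      have h1 := Finset.card_le_card hssub
      have h2 := Finset.card_le_card hpsub
      have e1 := Finset.card_insert_le M (T'.filter (sGood T'))
      omega

lemma mem_sigN {T : Finset ℕ} {u t : ℕ} : t ∈ sigN T u ↔ t ∈ T ∧ adjN t u := by
  simp [sigN]

/-- the signature of a vertex not in T lands in a small set of values -/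
lemma sig_classify (T : Finset ℕ) (u : ℕ) (hu : u ∉ T) :
    sigN T u = ∅ ∨
    (∃ t ∈ T, sGood T t ∧ sigN T u = {t}) ∨
    (∃ t ∈ T, pGood T t ∧ sigN T u = {t, t+2}) := by
  rcases u with _ | b
  · -- u = 0 : sigN T 0 ⊆ {1}
    by_cases h1 : 1 ∈ T
    · refine Or.inr (Or.inl ⟨1, h1, ?_, ?_⟩)
      · refine Or.inr ⟨?_, ?_⟩
        · intro a ha hae; rw [show a = 0 by omega] at ha; exact hu ha
        · intro a ha hae; omega
      · ext x; simp only [mem_sigN, Finset.mem_singleton, adjN]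
        constructor
        · rintro ⟨hx, h | h⟩ <;> omega
        · rintro rfl; exact ⟨h1, by omega⟩
    · left
      rw [sigN, Finset.filter_eq_empty_iff]
      rintro t ht (h | h)
      · omega
      · exact h1 (by rwa [show t = 1 by omega] at ht)
  · by_cases hb : b ∈ T <;> by_cases hb2 : b + 2 ∈ T
    · -- both: pair
      refine Or.inr (Or.inr ⟨b, hb, ⟨hu, hb2⟩, ?_⟩)
      ext x; simp only [mem_sigN, Finset.mem_insert, Finset.mem_singleton, adjN]
      constructor
      · rintro ⟨hx, h | h⟩ <;> omega
      · rintro (rfl | rfl)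
        · exact ⟨hb, by omega⟩
        · exact ⟨hb2, by omega⟩
    · -- only b
      refine Or.inr (Or.inl ⟨b, hb, Or.inl ⟨hu, hb2⟩, ?_⟩)
      ext x; simp only [mem_sigN, Finset.mem_singleton, adjN]
      constructor
      · rintro ⟨hx, h | h⟩
        · omega
        · exact absurd (by rwa [show x = b + 2 by omega] at hx) hb2
      · rintro rfl; exact ⟨hb, by omega⟩
    · -- only b+2
      refine Or.inr (Or.inl ⟨b+2, hb2, ?_, ?_⟩)
      · refine Or.inr ⟨?_, ?_⟩
        · intro a ha hae; rw [show a = b + 1 by omega] at ha; exact hu ha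
        · intro a ha hae; rw [show a = b by omega] at ha; exact hb ha
      · ext x; simp only [mem_sigN, Finset.mem_singleton, adjN]
        constructor
        · rintro ⟨hx, h | h⟩
          · exact absurd (by rwa [show x = b by omega] at hx) hb
          · omega
        · rintro rfl; exact ⟨hb2, by omega⟩
    · left
      rw [sigN, Finset.filter_eq_empty_iff]
      rintro t ht (h | h)
      · exact hb (by rwa [show t = b by omega] at ht)
      · exact hb2 (by rwa [show t = b + 2 by omega] at ht)

lemma key2 (n : ℕ) (T : Finset ℕ) (hsub : T ⊆ Finset.range n)
    (hinj : ∀ u v, u < n → v < n → u ∉ T → v ∉ T → u ≠ v → sigN T u ≠ sigN T v) :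
    2 * n ≤ 5 * T.card + 2 := by
  classical
  set D : Finset ℕ := Finset.range n \ T with hD
  have hDcard : D.card = n - T.card := by
    rw [hD, Finset.card_sdiff_of_subset hsub, Finset.card_range]
  have hTn : T.card ≤ n := by
    simpa using Finset.card_le_card hsub
  set V : Finset (Finset ℕ) :=
    insert ∅ (((T.filter (sGood T)).image fun t => {t}) ∪
      ((T.filter (pGood T)).image fun t => {t, t+2})) with hV
  have hmaps : ∀ u ∈ D, sigN T u ∈ V := by
    intro u huD
    rw [hD, Finset.mem_sdiff] at huD
    rcases sig_classify T u huD.2 with h | ⟨t, ht, hg, h⟩ | ⟨t, ht, hg, h⟩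
    · rw [h, hV]; exact Finset.mem_insert_self _ _
    · rw [h, hV]
      exact Finset.mem_insert_of_mem (Finset.mem_union_left _
        (Finset.mem_image.mpr ⟨t, Finset.mem_filter.mpr ⟨ht, hg⟩, rfl⟩))
    · rw [h, hV]
      exact Finset.mem_insert_of_mem (Finset.mem_union_right _
        (Finset.mem_image.mpr ⟨t, Finset.mem_filter.mpr ⟨ht, hg⟩, rfl⟩))
  have hinj' : Set.InjOn (sigN T) ↑D := by
    intro u hu v hv he
    simp only [Finset.coe_sdiff, Set.mem_diff, Finset.mem_coe, Finset.mem_range,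
      hD] at hu hv
    by_contra hne
    exact hinj u v (by simpa using hu.1) (by simpa using hv.1) hu.2 hv.2 hne he
  have hcard := Finset.card_le_card_of_injOn (sigN T) hmaps hinj'
  have hVcard : V.card ≤ 1 + ((T.filter (sGood T)).card + (T.filter (pGood T)).card) := by
    calc V.card ≤ _ + 1 := Finset.card_insert_le _ _
    _ ≤ _ := by
        have := Finset.card_union_le ((T.filter (sGood T)).image fun t => ({t} : Finset ℕ))
          ((T.filter (pGood T)).image fun t => ({t, t+2} : Finset ℕ))
        have h1 := Finset.card_image_le (s := T.filter (sGood T)) (f := fun t => ({t} : Finset ℕ))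
        have h2 := Finset.card_image_le (s := T.filter (pGood T))
          (f := fun t => ({t, t+2} : Finset ℕ))
        omega
  have hk3 := key3 T.card T rfl
  omega

lemma sigN_eq_empty_iff {T : Finset ℕ} {u : ℕ} :
    sigN T u = ∅ ↔ ∀ t ∈ T, ¬ adjN t u := by
  rw [sigN, Finset.filter_eq_empty_iff]

/-- from the two "bad pattern" conditions, signatures are injective off T -/
lemma bp_inj (n : ℕ) (T : Finset ℕ)
    (h1 : ∀ u, u + 2 < n → u ∉ T → u + 2 ∉ T → u + 1 ∈ T →
      (∃ a, a + 1 = u ∧ a ∈ T) ∨ u + 3 ∈ T)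
    (h2 : ∀ u v, u < v → v < n → u ∉ T → v ∉ T →
      sigN T u = ∅ → sigN T v = ∅ → False) :
    ∀ u v, u < n → v < n → u ∉ T → v ∉ T → u ≠ v → sigN T u ≠ sigN T v := by
  have main : ∀ u v, u < v → v < n → u ∉ T → v ∉ T → sigN T u ≠ sigN T v := by
    intro u v huv hvn hu hv he
    rcases Finset.eq_empty_or_nonempty (sigN T u) with hemp | ⟨t, htmem⟩
    · exact h2 u v huv hvn hu hv hemp (he ▸ hemp)
    · have htv : t ∈ sigN T v := he ▸ htmem
      rw [mem_sigN] at htmem htv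
      obtain ⟨htT, hadj⟩ := htmem
      obtain ⟨-, hadj'⟩ := htv
      have hveq : v = u + 2 ∧ t = u + 1 := by
        rcases hadj with h | h <;> rcases hadj' with h' | h' <;> omega
      obtain ⟨rfl, rfl⟩ := hveq
      rcases h1 u (by omega) hu hv htT with ⟨a, ha1, haT⟩ | hT3
      · have : a ∈ sigN T u := mem_sigN.mpr ⟨haT, Or.inl ha1⟩
        rw [he, mem_sigN] at this
        rcases this.2 with h | h <;> omega
      · have : u + 3 ∈ sigN T (u + 2) := mem_sigN.mpr ⟨hT3, Or.inr rfl⟩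
        rw [← he, mem_sigN] at this
        rcases this.2 with h | h <;> omega
  intro u v hun hvn hu hv hne
  rcases lt_or_gt_of_ne hne with h | h
  · exact main u v h hvn hu hv
  · exact fun he => main v u h hun hv hu he.symm
def AdjRes (n : ℕ) (S : Finset (Fin n ⊕ Fin 1)) : Prop :=
  ∀ x y, x ≠ y → ∃ z ∈ S, z = x ∨ z = y ∨ ¬ (fanAdj n z x ↔ fanAdj n z y)

instance (n : ℕ) (S : Finset (Fin n ⊕ Fin 1)) : Decidable (AdjRes n S) := by
  unfold AdjRes; infer_instance

lemma distK_ne_iff {k n : ℕ} (hk : 1 ≤ k) (x y z : Fin n ⊕ Fin 1) (hxy : x ≠ y) :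
    (distK (Fan n) k x z ≠ distK (Fan n) k y z) ↔
      (z = x ∨ z = y ∨ ¬ (fanAdj n z x ↔ fanAdj n z y)) := by
  have hsymm : ∀ a b : Fin n ⊕ Fin 1, fanAdj n a b ↔ fanAdj n b a := by
    intro a b
    rw [← fan_adj, ← fan_adj]
    exact ⟨fun h => h.symm, fun h => h.symm⟩
  rw [distK_fan hk, distK_fan hk]
  by_cases h1 : z = x
  · subst h1
    rw [if_pos rfl, if_neg (fun h : y = z => hxy h.symm)]
    simp only [eq_self_iff_true, true_or, iff_true]
    by_cases h2 : fanAdj n y z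
    · rw [if_pos h2]; decide
    · rw [if_neg h2]; decide
  · rw [if_neg (fun h : x = z => h1 h.symm)]
    by_cases h2 : z = y
    · subst h2
      rw [if_pos rfl]
      simp only [eq_self_iff_true, true_or, or_true, iff_true]
      by_cases h3 : fanAdj n x z
      · rw [if_pos h3]; decide
      · rw [if_neg h3]; decide
    · rw [if_neg (fun h : y = z => h2 h.symm)]
      simp only [h1, h2, false_or]
      have e3 : fanAdj n z x ↔ fanAdj n x z := hsymm z x
      have e4 : fanAdj n z y ↔ fanAdj n y z := hsymm z y
      by_cases h3 : fanAdj n x z <;> by_cases h4 : fanAdj n y z <;>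
        simp only [if_pos, if_neg, h3, h4, e3, e4, ite_true, ite_false,
          iff_true, iff_false, not_true, not_false_iff, ne_eq, not_not] <;>
        first | decide | (simp [h3, h4])

lemma res_iff {k n : ℕ} (hk : 1 ≤ k) (S : Finset (Fin n ⊕ Fin 1)) :
    IsDistKResolving (Fan n) k ↑S ↔ AdjRes n S := by
  constructor
  · intro h x y hxy
    obtain ⟨z, hz, hne⟩ := h x y hxy
    exact ⟨z, by simpa using hz, (distK_ne_iff hk x y z hxy).mp hne⟩
  · intro h x y hxy
    obtain ⟨z, hz, hne⟩ := h x y hxy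
    exact ⟨z, by simpa using hz, (distK_ne_iff hk x y z hxy).mpr hne⟩
lemma dimK_fan_eq {k n : ℕ} (hk : 1 ≤ k) :
    dimK (Fan n) k = sInf { m | ∃ S : Finset (Fin n ⊕ Fin 1), AdjRes n S ∧ S.card = m } := by
  unfold dimK
  congr 1
  ext m
  exact exists_congr fun S => and_congr_left' (res_iff hk S)

lemma dimK_fan_le {k n : ℕ} (hk : 1 ≤ k) (S : Finset (Fin n ⊕ Fin 1)) (h : AdjRes n S) :
    dimK (Fan n) k ≤ S.card := by
  rw [dimK_fan_eq hk]
  exact Nat.sInf_le ⟨S, h, rfl⟩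

lemma le_dimK_fan {k n v : ℕ} (hk : 1 ≤ k)
    (hlow : ∀ S : Finset (Fin n ⊕ Fin 1), AdjRes n S → v ≤ S.card)
    (S₀ : Finset (Fin n ⊕ Fin 1)) (h₀ : AdjRes n S₀) :
    v ≤ dimK (Fan n) k := by
  rw [dimK_fan_eq hk]
  have hne : { m | ∃ S : Finset (Fin n ⊕ Fin 1), AdjRes n S ∧ S.card = m }.Nonempty :=
    ⟨S₀.card, S₀, h₀, rfl⟩
  obtain ⟨S, hS, hcard⟩ := Nat.sInf_mem hne
  rw [← hcard]
  exact hlow S hS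

/-- the path part of a vertex subset, as a set of naturals -/
def pathT (n : ℕ) (S : Finset (Fin n ⊕ Fin 1)) : Finset ℕ :=
  (S.image (Sum.elim Fin.val (fun _ => n))).erase n

lemma pathT_card (n : ℕ) (S : Finset (Fin n ⊕ Fin 1)) : (pathT n S).card ≤ S.card :=
  le_trans (Finset.card_le_card (Finset.erase_subset _ _)) (Finset.card_image_le)

lemma pathT_sub (n : ℕ) (S : Finset (Fin n ⊕ Fin 1)) : pathT n S ⊆ Finset.range n := by
  intro t ht
  simp only [pathT, Finset.mem_erase, Finset.mem_image] at ht
  obtain ⟨hne, z, hz, hval⟩ := ht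
  rcases z with i | i
  · simp only [Sum.elim_inl] at hval
    rw [Finset.mem_range, ← hval]; exact i.isLt
  · simp only [Sum.elim_inr] at hval; exact absurd hval.symm hne

lemma mem_pathT {n : ℕ} {S : Finset (Fin n ⊕ Fin 1)} {u : ℕ} (hu : u < n) :
    u ∈ pathT n S ↔ Sum.inl (⟨u, hu⟩ : Fin n) ∈ S := by
  simp only [pathT, Finset.mem_erase, Finset.mem_image]
  constructor
  · rintro ⟨hne, z, hz, hval⟩
    rcases z with i | i
    · simp only [Sum.elim_inl] at hval
      have : i = ⟨u, hu⟩ := Fin.ext hval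
      rwa [← this]
    · simp only [Sum.elim_inr] at hval; exact absurd hval.symm hne
  · intro h
    exact ⟨by omega, Sum.inl ⟨u, hu⟩, h, rfl⟩

/-- lower bound : any adjacency-resolving set satisfies 2n ≤ 5|S|+2 -/
lemma lower_generic {n : ℕ} (S : Finset (Fin n ⊕ Fin 1)) (h : AdjRes n S) :
    2 * n ≤ 5 * S.card + 2 := by
  set T := pathT n S with hT
  have hinj : ∀ u v, u < n → v < n → u ∉ T → v ∉ T → u ≠ v → sigN T u ≠ sigN T v := by
    intro u v hun hvn hu hv huv
    obtain ⟨z, hz, hcase⟩ := h (Sum.inl ⟨u, hun⟩) (Sum.inl ⟨v, hvn⟩)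
      (fun hc => huv (by simpa using congrArg (Sum.elim Fin.val (fun _ => n)) hc))
    rcases z with t | c
    · have htT : (t : Fin n).val ∈ T := (mem_pathT t.isLt).mpr hz
      rcases hcase with h1 | h1 | h1
      · rw [Sum.inl.inj h1] at htT; exact absurd htT hu
      · rw [Sum.inl.inj h1] at htT; exact absurd htT hv
      · intro he
        have hmu : t.val ∈ sigN T u ↔ t.val ∈ sigN T v := by rw [he]
        rw [mem_sigN, mem_sigN] at hmu
        have : adjN t.val u ↔ adjN t.val v := by tauto
        exact h1 this
    · rcases hcase with h1 | h1 | h1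
      · exact absurd h1 (by simp)
      · exact absurd h1 (by simp)
      · exact absurd Iff.rfl h1
  have hx : 2 * n ≤ 5 * T.card + 2 := key2 n T (pathT_sub n S) hinj
  have hy2 : T.card ≤ S.card := pathT_card n S
  have hy := pathT_card n S
  omega
/-- build a resolving set from a good Finset ℕ -/
lemma upper_generic {n : ℕ} (T : Finset ℕ) (hsub : T ⊆ Finset.range n)
    (hinj : ∀ u v, u < n → v < n → u ∉ T → v ∉ T → u ≠ v → sigN T u ≠ sigN T v)
    (hcen : ∀ u, u < n → u ∉ T → ∃ t ∈ T, ¬ adjN t u) :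
    ∃ S : Finset (Fin n ⊕ Fin 1), AdjRes n S ∧ S.card = T.card := by
  have hlt : ∀ m ∈ T, m < n := fun m hm => Finset.mem_range.mp (hsub hm)
  set S : Finset (Fin n ⊕ Fin 1) :=
    (T.attachFin hlt).map ⟨Sum.inl, Sum.inl_injective⟩ with hS
  have hmemS : ∀ x : Fin n ⊕ Fin 1, x ∈ S ↔ ∃ i : Fin n, i.val ∈ T ∧ x = Sum.inl i := by
    intro x
    simp only [hS, Finset.mem_map, Finset.mem_attachFin, Function.Embedding.coeFn_mk]
    constructor
    · rintro ⟨i, hi, rfl⟩; exact ⟨i, hi, rfl⟩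
    · rintro ⟨i, hi, rfl⟩; exact ⟨i, hi, rfl⟩
  have hmemS' : ∀ u : Fin n, Sum.inl u ∈ S ↔ u.val ∈ T := by
    intro u; rw [hmemS]
    constructor
    · rintro ⟨i, hi, he⟩; rw [Sum.inl.inj he]; exact hi
    · intro h; exact ⟨u, h, rfl⟩
  refine ⟨S, ?_, by rw [hS, Finset.card_map, Finset.card_attachFin]⟩
  rintro (u | c) (v | c') hxy
  · -- path vs path
    have huv : u ≠ v := fun h => hxy (congrArg _ h)
    by_cases hu : u.val ∈ T
    · exact ⟨Sum.inl u, (hmemS' u).mpr hu, Or.inl rfl⟩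
    by_cases hv : v.val ∈ T
    · exact ⟨Sum.inl v, (hmemS' v).mpr hv, Or.inr (Or.inl rfl)⟩
    have hne := hinj u.val v.val u.isLt v.isLt hu hv (fun h => huv (Fin.ext h))
    have : ∃ t, ¬ (t ∈ sigN T u.val ↔ t ∈ sigN T v.val) := by
      by_contra hcon
      push_neg at hcon
      exact hne (Finset.ext fun t => hcon t)
    obtain ⟨t, ht⟩ := this
    have htT : t ∈ T := by
      rcases Decidable.em (t ∈ sigN T u.val) with h | h
      · exact (mem_sigN.mp h).1
      · rcases Decidable.em (t ∈ sigN T v.val) with h' | h'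
        · exact (mem_sigN.mp h').1
        · exact absurd (iff_of_false h h') ht
    have htn : t < n := hlt t htT
    refine ⟨Sum.inl ⟨t, htn⟩, (hmemS' _).mpr htT, Or.inr (Or.inr ?_)⟩
    intro hiff
    apply ht
    rw [mem_sigN, mem_sigN]
    constructor
    · rintro ⟨-, ha⟩; exact ⟨htT, hiff.mp ha⟩
    · rintro ⟨-, ha⟩; exact ⟨htT, hiff.mpr ha⟩
  · -- path vs center
    by_cases hu : u.val ∈ T
    · exact ⟨Sum.inl u, (hmemS' u).mpr hu, Or.inl rfl⟩
    obtain ⟨t, htT, htadj⟩ := hcen u.val u.isLt hu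
    have htn : t < n := hlt t htT
    refine ⟨Sum.inl ⟨t, htn⟩, (hmemS' _).mpr htT, Or.inr (Or.inr ?_)⟩
    intro hiff
    exact htadj (hiff.mpr trivial)
  · -- center vs path
    by_cases hv : v.val ∈ T
    · exact ⟨Sum.inl v, (hmemS' v).mpr hv, Or.inr (Or.inl rfl)⟩
    obtain ⟨t, htT, htadj⟩ := hcen v.val v.isLt hv
    have htn : t < n := hlt t htT
    refine ⟨Sum.inl ⟨t, htn⟩, (hmemS' _).mpr htT, Or.inr (Or.inr ?_)⟩
    intro hiff
    exact htadj (hiff.mp trivial)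
  · exact absurd (congrArg Sum.inr (Subsingleton.elim c c')) hxy
lemma div5_identity (n : ℕ) : (n+3)/5 + (n+1)/5 = (2*n+2)/5 := by
  obtain ⟨q, r, hr, rfl⟩ : ∃ q r, r < 5 ∧ n = 5*q + r :=
    ⟨n/5, n%5, Nat.mod_lt _ (by norm_num), by omega⟩
  interval_cases r <;> omega

lemma count13 (n : ℕ) :
    ((Finset.range n).filter (fun i => i % 5 = 1 ∨ i % 5 = 3)).card
      = (n+3)/5 + (n+1)/5 := by
  induction n with
  | zero => simp
  | succ n ih =>
    rw [Finset.range_add_one, Finset.filter_insert]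
    by_cases h : n % 5 = 1 ∨ n % 5 = 3
    · rw [if_pos h, Finset.card_insert_of_notMem (by simp)]
      omega
    · rw [if_neg h]
      omega

def Pgen (n i : ℕ) : Prop := (i % 5 = 1 ∧ i + 2 ≠ n) ∨ i % 5 = 3 ∨ (n % 5 = 3 ∧ i + 1 = n)
instance (n i : ℕ) : Decidable (Pgen n i) := inferInstanceAs (Decidable (_ ∨ _))

def Tgen (n : ℕ) : Finset ℕ := (Finset.range n).filter (Pgen n)

lemma mem_Tgen {n i : ℕ} : i ∈ Tgen n ↔ i < n ∧ Pgen n i := by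
  simp [Tgen]

set_option maxHeartbeats 1600000 in
lemma card_Tgen {n : ℕ} (h7 : 7 ≤ n) : (Tgen n).card = (2*n+2)/5 := by
  by_cases hr : n % 5 = 3
  · have he : Tgen n = insert (n-1)
        (((Finset.range n).filter (fun i => i % 5 = 1 ∨ i % 5 = 3)).erase (n-2)) := by
      ext i
      simp only [mem_Tgen, Pgen, Finset.mem_insert, Finset.mem_erase,
        Finset.mem_filter, Finset.mem_range]
      omega
    rw [he, Finset.card_insert_of_notMem (by
        simp only [Finset.mem_erase, Finset.mem_filter, Finset.mem_range]; omega),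
      Finset.card_erase_of_mem (by
        simp only [Finset.mem_filter, Finset.mem_range]; omega),
      count13]
    have hid := div5_identity n
    have hge : 2 ≤ (n+3)/5 := le_trans (by norm_num) (Nat.div_le_div_right (by omega : 10 ≤ n + 3))
    omega
  · have he : Tgen n = (Finset.range n).filter (fun i => i % 5 = 1 ∨ i % 5 = 3) := by
      ext i
      simp only [mem_Tgen, Pgen, Finset.mem_filter, Finset.mem_range]
      omega
    rw [he, count13]
    exact div5_identity n

set_option maxHeartbeats 1600000 in
lemma Tgen_h1 {n : ℕ} (h7 : 7 ≤ n) : ∀ u, u + 2 < n → u ∉ Tgen n → u + 2 ∉ Tgen n →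
    u + 1 ∈ Tgen n → (∃ a, a + 1 = u ∧ a ∈ Tgen n) ∨ u + 3 ∈ Tgen n := by
  intro u h hu hu2 hu1
  rcases u with _ | a
  · right
    simp only [mem_Tgen] at hu hu2 hu1 ⊢
    unfold Pgen at hu hu2 hu1 ⊢
    omega
  · by_cases ha : a ∈ Tgen n
    · exact Or.inl ⟨a, rfl, ha⟩
    · right
      simp only [mem_Tgen] at hu hu2 hu1 ha ⊢
      unfold Pgen at hu hu2 hu1 ha ⊢
      omega

set_option maxHeartbeats 1600000 in
lemma Tgen_dark {n u : ℕ} (h7 : 7 ≤ n) (hun : u < n) (hu : u ∉ Tgen n)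
    (h1 : u + 1 ∉ Tgen n) (h0 : ∀ a, a + 1 = u → a ∉ Tgen n) :
    (n % 5 = 1 ∧ u + 1 = n) ∨ (n % 5 = 3 ∧ u + 3 = n) := by
  rcases u with _ | a
  · exfalso
    simp only [mem_Tgen] at hu h1
    unfold Pgen at hu h1
    omega
  · have h0' := h0 a rfl
    simp only [mem_Tgen] at hu h1 h0'
    unfold Pgen at hu h1 h0'
    omega

lemma Tgen_h2 {n : ℕ} (h7 : 7 ≤ n) : ∀ u v, u < v → v < n → u ∉ Tgen n → v ∉ Tgen n →
    sigN (Tgen n) u = ∅ → sigN (Tgen n) v = ∅ → False := by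
  intro u v huv hvn hu hv hsu hsv
  rw [sigN_eq_empty_iff] at hsu hsv
  have du := Tgen_dark h7 (by omega) hu
    (fun h => hsu _ h (Or.inr rfl)) (fun a ha h => hsu _ h (Or.inl ha))
  have dv := Tgen_dark h7 hvn hv
    (fun h => hsv _ h (Or.inr rfl)) (fun a ha h => hsv _ h (Or.inl ha))
  omega

lemma Tgen_cen {n : ℕ} (h7 : 7 ≤ n) : ∀ u, u < n → u ∉ Tgen n →
    ∃ t ∈ Tgen n, ¬ adjN t u := by
  intro u hun hu
  have m1 : 1 ∈ Tgen n := by simp only [mem_Tgen]; unfold Pgen; omega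
  have m3 : 3 ∈ Tgen n := by simp only [mem_Tgen]; unfold Pgen; omega
  have hcase : u = 0 ∨ u = 1 ∨ u = 2 ∨ u = 3 ∨ u = 4 ∨ 5 ≤ u := by omega
  rcases hcase with rfl | rfl | rfl | rfl | rfl | h5
  · exact ⟨3, m3, by unfold adjN; omega⟩
  · exact absurd m1 hu
  · by_cases h8 : n = 8
    · refine ⟨7, ?_, by unfold adjN; omega⟩
      simp only [mem_Tgen]; unfold Pgen; omega
    · refine ⟨6, ?_, by unfold adjN; omega⟩
      simp only [mem_Tgen]; unfold Pgen; omega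
  · exact absurd m3 hu
  · exact ⟨1, m1, by unfold adjN; omega⟩
  · exact ⟨1, m1, by unfold adjN; omega⟩

lemma upper_ge7 {n : ℕ} (h7 : 7 ≤ n) :
    ∃ S : Finset (Fin n ⊕ Fin 1), AdjRes n S ∧ S.card = (2*n+2)/5 := by
  obtain ⟨S, hres, hcard⟩ := upper_generic (Tgen n) (Finset.filter_subset _ _)
    (bp_inj n (Tgen n) (Tgen_h1 h7) (Tgen_h2 h7)) (Tgen_cen h7)
  exact ⟨S, hres, by rw [hcard, card_Tgen h7]⟩
lemma lower_floor {n : ℕ} (S : Finset (Fin n ⊕ Fin 1)) (h : AdjRes n S) :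
    (2*n+2)/5 ≤ S.card := by
  have := lower_generic S h
  omega

lemma upper_small {n : ℕ} (T : Finset ℕ) (hsub : T ⊆ Finset.range n)
    (hinj : ∀ u v, u < n → v < n → u ∉ T → v ∉ T → u ≠ v → sigN T u ≠ sigN T v)
    (hcen : ∀ u, u < n → u ∉ T → ∃ t ∈ T, ¬ adjN t u) :
    ∃ S : Finset (Fin n ⊕ Fin 1), AdjRes n S ∧ S.card = T.card :=
  upper_generic T hsub hinj hcen

lemma upper1 : ∃ S : Finset (Fin 1 ⊕ Fin 1), AdjRes 1 S ∧ S.card = 1 := by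
  obtain ⟨S, h1, h2⟩ := upper_small (n := 1) ({0} : Finset ℕ) (by decide)
    (by intro u v hun hvn hu hv huv
        interval_cases u <;> interval_cases v <;> revert hu hv huv <;> decide)
    (by intro u hun hu; interval_cases u <;> revert hu <;> decide)
  exact ⟨S, h1, by rw [h2]; rfl⟩

lemma upper2 : ∃ S : Finset (Fin 2 ⊕ Fin 1), AdjRes 2 S ∧ S.card = 2 := by
  obtain ⟨S, h1, h2⟩ := upper_small (n := 2) ({0, 1} : Finset ℕ) (by decide)
    (by intro u v hun hvn hu hv huv
        interval_cases u <;> interval_cases v <;> revert hu hv huv <;> decide)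
    (by intro u hun hu; interval_cases u <;> revert hu <;> decide)
  exact ⟨S, h1, by rw [h2]; rfl⟩

lemma upper3 : ∃ S : Finset (Fin 3 ⊕ Fin 1), AdjRes 3 S ∧ S.card = 2 := by
  obtain ⟨S, h1, h2⟩ := upper_small (n := 3) ({0, 1} : Finset ℕ) (by decide)
    (by intro u v hun hvn hu hv huv
        interval_cases u <;> interval_cases v <;> revert hu hv huv <;> decide)
    (by intro u hun hu; interval_cases u <;> revert hu <;> decide)
  exact ⟨S, h1, by rw [h2]; rfl⟩

lemma upper4 : ∃ S : Finset (Fin 4 ⊕ Fin 1), AdjRes 4 S ∧ S.card = 2 := by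
  obtain ⟨S, h1, h2⟩ := upper_small (n := 4) ({1, 2} : Finset ℕ) (by decide)
    (by intro u v hun hvn hu hv huv
        interval_cases u <;> interval_cases v <;> revert hu hv huv <;> decide)
    (by intro u hun hu; interval_cases u <;> revert hu <;> decide)
  exact ⟨S, h1, by rw [h2]; rfl⟩

lemma upper5 : ∃ S : Finset (Fin 5 ⊕ Fin 1), AdjRes 5 S ∧ S.card = 2 := by
  obtain ⟨S, h1, h2⟩ := upper_small (n := 5) ({1, 2} : Finset ℕ) (by decide)
    (by intro u v hun hvn hu hv huv
        interval_cases u <;> interval_cases v <;> revert hu hv huv <;> decide)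
    (by intro u hun hu; interval_cases u <;> revert hu <;> decide)
  exact ⟨S, h1, by rw [h2]; rfl⟩

lemma upper6 : ∃ S : Finset (Fin 6 ⊕ Fin 1), AdjRes 6 S ∧ S.card = 3 := by
  obtain ⟨S, h1, h2⟩ := upper_small (n := 6) ({0, 1, 3} : Finset ℕ) (by decide)
    (by intro u v hun hvn hu hv huv
        interval_cases u <;> interval_cases v <;> revert hu hv huv <;> decide)
    (by intro u hun hu; interval_cases u <;> revert hu <;> decide)
  exact ⟨S, h1, by rw [h2]; rfl⟩

lemma low1 : ∀ S : Finset (Fin 1 ⊕ Fin 1), AdjRes 1 S → 1 ≤ S.card := by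
  intro S h
  obtain ⟨z, hz, -⟩ := h (Sum.inl 0) (Sum.inr 0) (by exact Sum.inl_ne_inr)
  exact Finset.card_pos.mpr ⟨z, hz⟩

lemma low2 : ∀ S : Finset (Fin 2 ⊕ Fin 1), AdjRes 2 S → 2 ≤ S.card := by decide

lemma low3 : ∀ S : Finset (Fin 3 ⊕ Fin 1), AdjRes 3 S → 2 ≤ S.card := by decide

set_option maxRecDepth 100000 in
set_option maxHeartbeats 4000000 in
lemma low6 : ∀ S : Finset (Fin 6 ⊕ Fin 1), AdjRes 6 S → 3 ≤ S.card := by decide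

/-- For any positive integer `k` and `n ≥ 1`, the fan `Pₙ + K₁` has
`dimₖ = 1` if `n = 1`, `dimₖ = 2` if `n ∈ {2,3}`, `dimₖ = 3` if `n = 6`,
and `dimₖ = ⌊(2n+2)/5⌋` otherwise. -/
theorem stmt10 (k n : ℕ) (hk : 1 ≤ k) (hn : 1 ≤ n) :
    (n = 1 → dimK (graphJoin (pathGraph n) (⊤ : SimpleGraph (Fin 1))) k = 1) ∧
    (n = 2 ∨ n = 3 → dimK (graphJoin (pathGraph n) (⊤ : SimpleGraph (Fin 1))) k = 2) ∧
    (n = 6 → dimK (graphJoin (pathGraph n) (⊤ : SimpleGraph (Fin 1))) k = 3) ∧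
    (n ≠ 1 ∧ n ≠ 2 ∧ n ≠ 3 ∧ n ≠ 6 →
      dimK (graphJoin (pathGraph n) (⊤ : SimpleGraph (Fin 1))) k = (2 * n + 2) / 5) := by
  refine ⟨?_, ?_, ?_, ?_⟩
  · rintro rfl
    show dimK (Fan 1) k = 1
    obtain ⟨S, hres, hcard⟩ := upper1
    have hle := dimK_fan_le hk S hres
    have hge := le_dimK_fan hk low1 S hres
    omega
  · rintro (rfl | rfl)
    · show dimK (Fan 2) k = 2
      obtain ⟨S, hres, hcard⟩ := upper2
      have hle := dimK_fan_le hk S hres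
      have hge := le_dimK_fan hk low2 S hres
      omega
    · show dimK (Fan 3) k = 2
      obtain ⟨S, hres, hcard⟩ := upper3
      have hle := dimK_fan_le hk S hres
      have hge := le_dimK_fan hk low3 S hres
      omega
  · rintro rfl
    show dimK (Fan 6) k = 3
    obtain ⟨S, hres, hcard⟩ := upper6
    have hle := dimK_fan_le hk S hres
    have hge := le_dimK_fan hk low6 S hres
    omega
  · rintro ⟨h1, h2, h3, h6⟩
    rcases (by omega : n = 4 ∨ n = 5 ∨ 7 ≤ n) with rfl | rfl | h7
    · show dimK (Fan 4) k = (2 * 4 + 2) / 5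
      obtain ⟨S, hres, hcard⟩ := upper4
      have hle := dimK_fan_le hk S hres
      have hge := le_dimK_fan hk lower_floor S hres
      omega
    · show dimK (Fan 5) k = (2 * 5 + 2) / 5
      obtain ⟨S, hres, hcard⟩ := upper5
      have hle := dimK_fan_le hk S hres
      have hge := le_dimK_fan hk lower_floor S hres
      omega
    · show dimK (Fan n) k = (2 * n + 2) / 5
      obtain ⟨S, hres, hcard⟩ := upper_ge7 h7
      have hle := dimK_fan_le hk S hres
      have hge := le_dimK_fan hk lower_floor S hres
      omega
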